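/- For every n ≥ 1, the set {x : Fin n → ℝ | ∑_{i=1}^{n} x_i = n(n+1)/2 and ∑_{i∈I} x_i ≥ |I|(|I|+1)/2 for every nonempty proper subset I ⊊ {1,…,n}} (the core of the game ℒ(I) = |I|(|I|+1)/2) is equal to the convex hull in ℝ^n of the finite set of permutation vectors {(σ(1)+1,…,σ(n)+1) | σ a bijection of Fin n} — the classical convex realization of the permutohedron P_n as the convex hull of {σ(1,…,n) | σ ∈ S_n}. -/

import Mathlib

open Finset
-- strictly monotone Fin m → ℕ grows at least like identity
lemma aux_strictMono_le {m : ℕ} (f : Fin m → ℕ) (hf : StrictMono f) :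
    ∀ k : Fin m, (k : ℕ) ≤ f k := by
  have H : ∀ N : ℕ, ∀ k : Fin m, (k : ℕ) = N → (k : ℕ) ≤ f k := by
    intro N
    induction N with
    | zero => intro k h; omega
    | succ j ih =>
      intro k h
      have hj : j < m := by omega
      have h1 : (⟨j, hj⟩ : Fin m) < k := by rw [Fin.lt_def]; simp; omega
      have h2 := hf h1
      have h3 := ih ⟨j, hj⟩ rfl
      simp only [Fin.val_mk] at h3 h2
      omega
  intro k; exact H k k rfl

lemma aux_gauss_nat (m : ℕ) : 2 * ∑ k ∈ range m, (k + 1) = m * (m + 1) := by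
  induction m with
  | zero => simp
  | succ j ih =>
    rw [Finset.sum_range_succ, Nat.mul_add]
    rw [ih]
    ring

lemma aux_gauss_real (m : ℕ) : ∑ k : Fin m, ((k : ℕ) + 1 : ℝ) = m * (m + 1) / 2 := by
  have h := aux_gauss_nat m
  have : ∑ k : Fin m, ((k : ℕ) + 1 : ℝ) = ((∑ k ∈ range m, (k + 1) : ℕ) : ℝ) := by
    push_cast
    rw [Fin.sum_univ_eq_sum_range (fun k => (k : ℝ) + 1) m]
  rw [this]
  have : ((2 * ∑ k ∈ range m, (k + 1) : ℕ) : ℝ) = (m : ℝ) * (m + 1) := by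
    rw [h]; push_cast; ring
  push_cast at this ⊢
  linarith

lemma aux_card_mul_le (J : Finset ℕ) :
    (J.card : ℝ) * (J.card + 1) / 2 ≤ ∑ j ∈ J, ((j : ℝ) + 1) := by
  set m := J.card with hm
  have hf : StrictMono (J.orderEmbOfFin hm.symm) := (J.orderEmbOfFin hm.symm).strictMono
  have key : ∑ j ∈ J, ((j : ℝ) + 1) = ∑ k : Fin m, ((J.orderEmbOfFin hm.symm k : ℝ) + 1) := by
    rw [← Finset.sum_coe_sort J (fun j => (j : ℝ) + 1)]
    rw [← Equiv.sum_comp (J.orderIsoOfFin hm.symm).toEquiv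
      (fun j : J => ((j : ℕ) : ℝ) + 1)]
    apply Finset.sum_congr rfl
    intro k _
    simp [Finset.coe_orderIsoOfFin_apply]
  rw [key, ← aux_gauss_real m]
  apply Finset.sum_le_sum
  intro k _
  have := aux_strictMono_le _ hf k
  have : ((k : ℕ) : ℝ) ≤ (J.orderEmbOfFin hm.symm k : ℝ) := by exact_mod_cast this
  linarith

-- Abel summation key lemma
lemma aux_abel (n : ℕ) (d e : ℕ → ℝ) (hd : ∀ k, k + 1 < n → d k ≤ d (k + 1))
    (hE : ∀ j, 0 < j → j < n → 0 ≤ ∑ k ∈ range j, e k)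
    (hEn : ∑ k ∈ range n, e k = 0) :
    ∑ k ∈ range n, d k * e k ≤ 0 := by
  have h := Finset.sum_range_by_parts d e n
  simp only [smul_eq_mul] at h
  rw [hEn, mul_zero, zero_sub] at h
  rw [h]
  simp only [neg_nonpos]
  apply Finset.sum_nonneg
  intro i hi
  rw [Finset.mem_range] at hi
  have h1 : d i ≤ d (i + 1) := hd i (by omega)
  have h2 : 0 ≤ ∑ k ∈ range (i + 1), e k := hE (i + 1) (by omega) (by omega)
  nlinarith


/-- **Example 1.2** (Batanin–Markl–Obradović): the core of the strictly convex game
`ℒ(I) = |I|(|I|+1)/2` on `n` players is the classical convex realization of the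
permutohedron `Pₙ`: it equals the convex hull of the permutation vectors
`{(σ(1)+1, …, σ(n)+1) | σ ∈ Sₙ}` in `ℝⁿ`. -/
theorem stmt_6 (n : ℕ) (hn : 1 ≤ n) :
    {x : Fin n → ℝ |
        (∑ i : Fin n, x i) = n * (n + 1) / 2 ∧
        ∀ I : Finset (Fin n), I.Nonempty → I ≠ Finset.univ →
          (I.card * (I.card + 1) : ℝ) / 2 ≤ ∑ i ∈ I, x i}
      = convexHull ℝ
          {x : Fin n → ℝ | ∃ σ : Equiv.Perm (Fin n),
            x = fun i => ((σ i : ℕ) + 1 : ℝ)} := by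
  set S : Set (Fin n → ℝ) := {x : Fin n → ℝ | ∃ σ : Equiv.Perm (Fin n),
      x = fun i => ((σ i : ℕ) + 1 : ℝ)} with hS
  set C : Set (Fin n → ℝ) := {x : Fin n → ℝ |
        (∑ i : Fin n, x i) = n * (n + 1) / 2 ∧
        ∀ I : Finset (Fin n), I.Nonempty → I ≠ Finset.univ →
          (I.card * (I.card + 1) : ℝ) / 2 ≤ ∑ i ∈ I, x i} with hC
  have hSfin : S.Finite := by
    have : S = Set.range (fun σ : Equiv.Perm (Fin n) => fun i => ((σ i : ℕ) + 1 : ℝ)) := by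
      ext x; simp [hS, Set.mem_setOf_eq, eq_comm]
    rw [this]; exact Set.finite_range _
  -- membership of permutation vectors in the core
  have hSC : S ⊆ C := by
    rintro x ⟨σ, rfl⟩
    constructor
    · rw [Equiv.sum_comp σ (fun i : Fin n => ((i : ℕ) + 1 : ℝ))]
      exact aux_gauss_real n
    · intro I hne hnu
      have hinj : Function.Injective (fun i : Fin n => (σ i : ℕ)) :=
        Fin.val_injective.comp σ.injective
      have hsum : ∑ i ∈ I, (((σ i : ℕ) : ℝ) + 1)
          = ∑ j ∈ I.image (fun i => (σ i : ℕ)), ((j : ℝ) + 1) := by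
        rw [Finset.sum_image (fun a _ b _ h => hinj h)]
      have hcard : (I.image (fun i => (σ i : ℕ))).card = I.card :=
        Finset.card_image_of_injective _ hinj
      have := aux_card_mul_le (I.image (fun i => (σ i : ℕ)))
      rw [hcard] at this
      rw [hsum]
      exact_mod_cast this
  -- convexity of the core
  have hCconv : Convex ℝ C := by
    rintro x hx y hy a b ha hb hab
    constructor
    · have : ∑ i : Fin n, (a • x + b • y) i = a * ∑ i : Fin n, x i + b * ∑ i : Fin n, y i := by
        simp [Finset.sum_add_distrib, Finset.mul_sum]
      rw [this, hx.1, hy.1]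
      ring_nf
      linear_combination (↑n * (↑n + 1) / 2) * hab
    · intro I hne hnu
      have h1 : ∑ i ∈ I, (a • x + b • y) i = a * ∑ i ∈ I, x i + b * ∑ i ∈ I, y i := by
        simp [Finset.sum_add_distrib, Finset.mul_sum]
      rw [h1]
      have hx2 := hx.2 I hne hnu
      have hy2 := hy.2 I hne hnu
      have hax := mul_le_mul_of_nonneg_left hx2 ha
      have hby := mul_le_mul_of_nonneg_left hy2 hb
      have hB : a * ((I.card : ℝ) * ((I.card : ℝ) + 1) / 2)
          + b * ((I.card : ℝ) * ((I.card : ℝ) + 1) / 2)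
          = (I.card : ℝ) * ((I.card : ℝ) + 1) / 2 := by
        rw [← add_mul, hab, one_mul]
      linarith
  apply Set.Subset.antisymm
  swap
  · exact convexHull_min hSC hCconv
  -- hard direction: core ⊆ convex hull
  intro x hx
  by_contra hxnot
  obtain ⟨f, u, hfu, hux⟩ := geometric_hahn_banach_closed_point
    (convex_convexHull ℝ S) (hSfin.isClosed_convexHull (𝕜 := ℝ)) hxnot
  -- coefficients of f
  set c : Fin n → ℝ := fun i => f (fun j => if i = j then (1 : ℝ) else 0) with hc
  have hfc : ∀ y : Fin n → ℝ, f y = ∑ i, y i * c i := by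
    intro y
    conv_lhs => rw [pi_eq_sum_univ y]
    rw [map_sum]
    apply Finset.sum_congr rfl
    intro i _
    rw [map_smul]
    simp [hc]
  set τ : Equiv.Perm (Fin n) := Tuple.sort c with hτ
  have hmono : Monotone (c ∘ τ) := Tuple.monotone_sort c
  set y0 : Fin n → ℝ := fun i => ((τ.symm i : ℕ) + 1 : ℝ) with hy0
  have hy0S : y0 ∈ S := ⟨τ.symm, rfl⟩
  have hy0hull : y0 ∈ convexHull ℝ S := subset_convexHull ℝ S hy0S
  -- the key inequality f x ≤ f y0
  set d : ℕ → ℝ := fun k => if h : k < n then c (τ ⟨k, h⟩) else 0 with hd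
  set e : ℕ → ℝ := fun k => if h : k < n then x (τ ⟨k, h⟩) - ((k : ℝ) + 1) else 0 with he
  have hrangeE : ∀ (j : ℕ) (hj : j ≤ n),
      ∑ k ∈ range j, e k = ∑ k : Fin j, (x (τ ⟨(k : ℕ), lt_of_lt_of_le k.2 hj⟩) - ((k : ℕ) + 1 : ℝ)) := by
    intro j hj
    rw [← Fin.sum_univ_eq_sum_range (fun k => e k) j]
    apply Finset.sum_congr rfl
    intro k _
    have hk : (k : ℕ) < n := lt_of_lt_of_le k.2 hj
    simp only [he, dif_pos hk]
  have hEn : ∑ k ∈ range n, e k = 0 := by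
    rw [hrangeE n le_rfl]
    rw [Finset.sum_sub_distrib]
    have h1 : ∑ k : Fin n, x (τ ⟨(k : ℕ), lt_of_lt_of_le k.2 le_rfl⟩) = ∑ i : Fin n, x i := by
      exact Equiv.sum_comp τ x
    rw [h1, hx.1, aux_gauss_real n, sub_self]
  have hE : ∀ j, 0 < j → j < n → 0 ≤ ∑ k ∈ range j, e k := by
    intro j hj0 hjn
    rw [hrangeE j hjn.le]
    -- build the subset I_j
    set g : Fin j ↪ Fin n :=
      ⟨fun k => τ ⟨(k : ℕ), lt_of_lt_of_le k.2 hjn.le⟩, by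
        intro a b hab
        have h2 : (a : ℕ) = (b : ℕ) := by
          simpa [Fin.mk.injEq] using τ.injective hab
        exact Fin.ext h2⟩ with hg
    set Ij : Finset (Fin n) := Finset.univ.map g with hIj
    have hcard : Ij.card = j := by simp [hIj]
    have hne : Ij.Nonempty := by rw [← Finset.card_pos, hcard]; exact hj0
    have hnu : Ij ≠ Finset.univ := by
      intro hcontra
      have : Ij.card = n := by rw [hcontra, Finset.card_univ, Fintype.card_fin]
      omega
    have hcore := hx.2 Ij hne hnu
    rw [hcard] at hcore
    have hsum : ∑ i ∈ Ij, x i = ∑ k : Fin j, x (τ ⟨(k : ℕ), lt_of_lt_of_le k.2 hjn.le⟩) := by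
      rw [hIj, Finset.sum_map]
      rfl
    rw [Finset.sum_sub_distrib, ← hsum, aux_gauss_real j]
    linarith
  have hdmono : ∀ k, k + 1 < n → d k ≤ d (k + 1) := by
    intro k hk
    have hk' : k < n := by omega
    simp only [hd, dif_pos hk, dif_pos hk']
    exact hmono (show (⟨k, hk'⟩ : Fin n) ≤ ⟨k + 1, hk⟩ by simp [Fin.le_def])
  have habel := aux_abel n d e hdmono hE hEn
  -- convert the abel sum to Fin n
  have hconv : ∑ k ∈ range n, d k * e k
      = ∑ k : Fin n, c (τ k) * (x (τ k) - ((k : ℕ) + 1 : ℝ)) := by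
    rw [← Fin.sum_univ_eq_sum_range (fun k => d k * e k) n]
    apply Finset.sum_congr rfl
    intro k _
    simp only [hd, he, dif_pos k.2, Fin.eta]
  rw [hconv] at habel
  have hkey : f x ≤ f y0 := by
    rw [hfc x, hfc y0]
    have h1 : ∑ i, x i * c i = ∑ k : Fin n, x (τ k) * c (τ k) :=
      (Equiv.sum_comp τ (fun i => x i * c i)).symm
    have h2 : ∑ i, y0 i * c i = ∑ k : Fin n, (((k : ℕ) : ℝ) + 1) * c (τ k) := by
      rw [← Equiv.sum_comp τ (fun i => y0 i * c i)]
      apply Finset.sum_congr rfl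
      intro k _
      simp [hy0]
    rw [h1, h2]
    have expand : ∑ k : Fin n, c (τ k) * (x (τ k) - ((k : ℕ) + 1 : ℝ))
        = ∑ k : Fin n, x (τ k) * c (τ k) - ∑ k : Fin n, (((k : ℕ) : ℝ) + 1) * c (τ k) := by
      rw [← Finset.sum_sub_distrib]
      apply Finset.sum_congr rfl
      intro k _
      ring
    rw [expand] at habel
    linarith
  have := hfu y0 hy0hull
  linarith
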